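/- arXiv:1309.1070 — 3 statements merged into one kernel-verified Lean document; each statement's English description precedes it below -/
import Mathlib

section
/- Let (G_i, g_i)_{i ∈ ℤ/6} be an exact cyclic six-term sequence of finitely generated abelian groups such that G_3 = 0 and G_5 is a free abelian group. Then there exist exact cyclic six-term sequences (H_i, h_i)_{i ∈ ℤ/6} and (F_i, f_i)_{i ∈ ℤ/6} in which every H_i and every F_i is a finitely generated free abelian group, together with group homomorphisms λ_i : H_i → F_i and η_i : F_i → G_i satisfying f_i ∘ λ_i = λ_{i+1} ∘ h_i and g_i ∘ η_i = η_{i+1} ∘ f_i for all i, such that for every i ∈ ℤ/6 the sequence 0 → H_i → F_i → G_i → 0 is short exact, i.e. λ_i is injective, η_i is surjective, and im λ_i = ker η_i. (In other words, every such sequence admits a length-one projective resolution by exact cyclic six-term sequences of finitely generated free abelian groups.) -/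
section Aux

variable {M N : Type*} [AddCommGroup M] [Module ℤ M] [AddCommGroup N] [Module ℤ N]

/-- Linear combination map. -/
noncomputable def lcAux {k : ℕ} (v : Fin k → M) : (Fin k → ℤ) →ₗ[ℤ] M :=
  Fintype.linearCombination ℤ v

lemma lcAux_apply {k : ℕ} (v : Fin k → M) (c : Fin k → ℤ) :
    lcAux v c = ∑ i, c i • v i := by
  rw [lcAux, Fintype.linearCombination_apply]
  exact Finset.sum_congr rfl fun i _ => int_smul_eq_zsmul _ _ _

lemma range_lcAux {k : ℕ} (v : Fin k → M) :
    LinearMap.range (lcAux v) = Submodule.span ℤ (Set.range v) :=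
  Fintype.range_linearCombination ℤ v

lemma map_lcAux {k : ℕ} (L : M →ₗ[ℤ] N) (v : Fin k → M) (c : Fin k → ℤ) :
    L (lcAux v c) = lcAux (fun j => L (v j)) c := by
  simp [lcAux_apply, map_sum]

lemma lcAux_zero_vec {k : ℕ} (c : Fin k → ℤ) :
    lcAux (fun _ => (0 : M)) c = 0 := by
  rw [lcAux_apply]
  exact Finset.sum_eq_zero fun i _ => zsmul_zero _

lemma lcAux_append {a b : ℕ} (u : Fin a → M) (w : Fin b → M) (c : Fin (a + b) → ℤ) :
    lcAux (Fin.append u w) c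
      = lcAux u (fun j => c (Fin.castAdd b j)) + lcAux w (fun j => c (Fin.natAdd a j)) := by
  simp [lcAux_apply, Fin.sum_univ_add, Fin.append_left, Fin.append_right]

/-- Inclusion of the first block, extended by zero. -/
def inlAux (a b : ℕ) : (Fin a → ℤ) →ₗ[ℤ] (Fin (a + b) → ℤ) where
  toFun c := Fin.append c 0
  map_add' c d := by
    funext x
    induction x using Fin.addCases with
    | left j => simp [Fin.append_left]
    | right j => simp [Fin.append_right]
  map_smul' z c := by
    funext x
    induction x using Fin.addCases with
    | left j => simp [Fin.append_left]
    | right j => simp [Fin.append_right]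

lemma inlAux_apply (a b : ℕ) (c : Fin a → ℤ) : inlAux a b c = Fin.append c 0 := rfl

/-- Projection onto the second block. -/
def sndAux (a b : ℕ) : (Fin (a + b) → ℤ) →ₗ[ℤ] (Fin b → ℤ) :=
  LinearMap.funLeft ℤ ℤ (Fin.natAdd a)

lemma sndAux_apply (a b : ℕ) (c : Fin (a + b) → ℤ) (j : Fin b) :
    sndAux a b c j = c (Fin.natAdd a j) := rfl

lemma snd_inl (a b : ℕ) (c : Fin a → ℤ) : sndAux a b (inlAux a b c) = 0 := by
  funext j
  simp [sndAux_apply, inlAux_apply, Fin.append_right]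

lemma inl_eq_zero {a b : ℕ} {c : Fin a → ℤ} (h : inlAux a b c = 0) : c = 0 := by
  funext j
  have := congrFun h (Fin.castAdd b j)
  simpa [inlAux_apply, Fin.append_left] using this

lemma append_eq_of_snd_zero {a b : ℕ} (c : Fin (a + b) → ℤ)
    (h : sndAux a b c = 0) : Fin.append (fun j => c (Fin.castAdd b j)) 0 = c := by
  funext x
  induction x using Fin.addCases with
  | left j => simp [Fin.append_left]
  | right j =>
      have := congrFun h j
      simp only [sndAux_apply] at this
      simp [Fin.append_right, this]

end Aux

/-- Every exact cyclic six-term sequence `(G_i, g_i)` of finitely generated abelian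
groups with `G_3 = 0` and `G_5` free admits a length-one projective resolution by
exact cyclic six-term sequences of finitely generated free abelian groups
(`H_i = ℤ^{n i}`, `F_i = ℤ^{m i}`). -/
theorem six_term_projective_resolution
    {G : ZMod 6 → Type*} [∀ i, AddCommGroup (G i)]
    (g : ∀ i, G i →+ G (i + 1))
    (hexact : ∀ i, (g i).range = (g (i + 1)).ker)
    (hfg : ∀ i, AddGroup.FG (G i))
    (hG3 : ∀ x : G 3, x = 0)
    (hfree : Module.Free ℤ (G 5)) :
    ∃ (n m : ZMod 6 → ℕ)
      (h : ∀ i, (Fin (n i) → ℤ) →+ (Fin (n (i + 1)) → ℤ))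
      (f : ∀ i, (Fin (m i) → ℤ) →+ (Fin (m (i + 1)) → ℤ))
      (lam : ∀ i, (Fin (n i) → ℤ) →+ (Fin (m i) → ℤ))
      (η : ∀ i, (Fin (m i) → ℤ) →+ G i),
      (∀ i, (h i).range = (h (i + 1)).ker) ∧
      (∀ i, (f i).range = (f (i + 1)).ker) ∧
      (∀ i, (f i).comp (lam i) = (lam (i + 1)).comp (h i)) ∧
      (∀ i, (g i).comp (η i) = (η (i + 1)).comp (f i)) ∧
      (∀ i, Function.Injective (lam i)) ∧
      (∀ i, Function.Surjective (η i)) ∧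
      (∀ i, (lam i).range = (η i).ker) := by
  classical
  -- linear versions of the maps
  let gl : ∀ i, G i →ₗ[ℤ] G (i + 1) := fun i => (g i).toIntLinearMap
  -- finiteness and Noetherianity
  have hfin : ∀ i, Module.Finite ℤ (G i) := fun i =>
    Module.Finite.iff_addGroup_fg.2 (hfg i)
  have hNoeth : ∀ i, IsNoetherian ℤ (G i) := fun i =>
    haveI := hfin i; isNoetherian_of_isNoetherianRing_of_finite ℤ (G i)
  -- generators of the kernels
  have hker_fg : ∀ i, ∃ (k : ℕ) (v : Fin k → G i),
      Submodule.span ℤ (Set.range v) = LinearMap.ker (gl i) := by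
    intro i
    haveI := hNoeth i
    have : (LinearMap.ker (gl i)).FG := IsNoetherian.noetherian _
    obtain ⟨k, v, hv⟩ := Submodule.fg_iff_exists_fin_generating_family.1 this
    exact ⟨k, v, hv⟩
  choose r v hv using hker_fg
  have hv_mem : ∀ i (j : Fin (r i)), gl i (v i j) = 0 := by
    intro i j
    have : v i j ∈ LinearMap.ker (gl i) := by
      rw [← hv i]; exact Submodule.subset_span ⟨j, rfl⟩
    exact this
  -- lifts of the generators of the next kernel
  have ht : ∀ i (j : Fin (r (i + 1))), ∃ x : G i, gl i x = v (i + 1) j := by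
    intro i j
    have h1 : g (i + 1) (v (i + 1) j) = 0 := hv_mem (i + 1) j
    have h2 : v (i + 1) j ∈ (g (i + 1)).ker := h1
    rw [← hexact i] at h2
    obtain ⟨x, hx⟩ := h2
    exact ⟨x, hx⟩
  choose t htt using ht
  -- the free resolution data
  let m : ZMod 6 → ℕ := fun i => r i + r (i + 1)
  let w : ∀ i, Fin (m i) → G i := fun i => Fin.append (v i) (t i)
  let ηL : ∀ i, (Fin (m i) → ℤ) →ₗ[ℤ] G i := fun i => lcAux (w i)
  let fL : ∀ i, (Fin (m i) → ℤ) →ₗ[ℤ] (Fin (m (i + 1)) → ℤ) :=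
    fun i => (inlAux (r (i + 1)) (r (i + 1 + 1))).comp (sndAux (r i) (r (i + 1)))
  -- commutation: gl i ∘ ηL i = ηL (i+1) ∘ fL i
  have comm : ∀ i c, gl i (ηL i c) = ηL (i + 1) (fL i c) := by
    intro i c
    have lhs : gl i (ηL i c)
        = lcAux (v (i + 1)) (fun j => c (Fin.natAdd (r i) j)) := by
      show gl i (lcAux (w i) c) = _
      rw [map_lcAux]
      have : (fun j => gl i (w i j))
          = Fin.append (fun _ => (0 : G (i + 1))) (fun j => v (i + 1) j) := by
        funext x
        induction x using Fin.addCases with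
        | left j => simp [w, Fin.append_left, hv_mem i j]
        | right j => simp [w, Fin.append_right, htt i j]
      rw [this, lcAux_append, lcAux_zero_vec, zero_add]
    rw [lhs]
    show _ = lcAux (Fin.append (v (i+1)) (t (i+1)))
      (Fin.append (fun j => c (Fin.natAdd (r i) j)) 0)
    rw [lcAux_append]
    have h1 : (fun j => Fin.append (fun j => c (Fin.natAdd (r i) j)) (0 : Fin (r (i+1+1)) → ℤ)
        (Fin.castAdd _ j)) = fun j => c (Fin.natAdd (r i) j) := by
      funext j; simp [Fin.append_left]
    have h2 : (fun j => Fin.append (fun j => c (Fin.natAdd (r i) j)) (0 : Fin (r (i+1+1)) → ℤ)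
        (Fin.natAdd _ j)) = (0 : Fin (r (i+1+1)) → ℤ) := by
      funext j; simp [Fin.append_right]
    rw [h1, h2, map_zero, add_zero]
  -- surjectivity of ηL
  have hsurj : ∀ i, Function.Surjective (ηL i) := by
    intro i x
    have h1 : g i x ∈ (g (i + 1)).ker := by
      rw [← hexact i]; exact ⟨x, rfl⟩
    have h2 : (gl i x) ∈ LinearMap.ker (gl (i + 1)) := h1
    rw [← hv (i + 1), ← range_lcAux] at h2
    obtain ⟨q, hq⟩ := h2
    have h3 : gl i (lcAux (t i) q) = gl i x := by
      rw [map_lcAux]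
      have : (fun j => gl i (t i j)) = fun j => v (i + 1) j := by
        funext j; exact htt i j
      rw [this]
      exact hq
    have h4 : x - lcAux (t i) q ∈ LinearMap.ker (gl i) := by
      simp [LinearMap.mem_ker, map_sub, h3]
    rw [← hv i, ← range_lcAux] at h4
    obtain ⟨p, hp⟩ := h4
    refine ⟨Fin.append p q, ?_⟩
    show lcAux (Fin.append (v i) (t i)) (Fin.append p q) = x
    rw [lcAux_append]
    have h5 : (fun j => Fin.append p q (Fin.castAdd _ j)) = p := by
      funext j; simp [Fin.append_left]
    have h6 : (fun j => Fin.append p q (Fin.natAdd _ j)) = q := by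
      funext j; simp [Fin.append_right]
    rw [h5, h6, hp]
    abel
  -- exactness of fL
  have hfzero : ∀ i c, fL (i + 1) (fL i c) = 0 := by
    intro i c
    show inlAux _ _ (sndAux _ _ (inlAux _ _ (sndAux _ _ c))) = 0
    rw [snd_inl, map_zero]
  have hfexact : ∀ i (c : Fin (m (i + 1)) → ℤ),
      fL (i + 1) c = 0 → ∃ y, fL i y = c := by
    intro i c hc
    have hsnd : sndAux (r (i + 1)) (r (i + 1 + 1)) c = 0 :=
      inl_eq_zero hc
    refine ⟨Fin.append 0 (fun j => c (Fin.castAdd _ j)), ?_⟩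
    show inlAux _ _ (sndAux _ _ (Fin.append 0 (fun j => c (Fin.castAdd _ j)))) = c
    have : sndAux (r i) (r (i + 1)) (Fin.append 0 (fun j => c (Fin.castAdd _ j)))
        = fun j => c (Fin.castAdd _ j) := by
      funext j; simp [sndAux_apply, Fin.append_right]
    rw [this]
    exact append_eq_of_snd_zero c hsnd
  -- the chase: exactness of the kernel complex
  have chase : ∀ i (x : Fin (m (i + 1)) → ℤ), ηL (i + 1) x = 0 → fL (i + 1) x = 0 →
      ∃ y, ηL i y = 0 ∧ fL i y = x := by
    intro i x hηx hfx
    obtain ⟨y0, hy0⟩ := hfexact i x hfx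
    have h1 : gl i (ηL i y0) = 0 := by
      rw [comm i y0, hy0, hηx]
    have h2 : ηL i y0 ∈ LinearMap.ker (gl i) := h1
    rw [← hv i, ← range_lcAux] at h2
    obtain ⟨p, hp⟩ := h2
    refine ⟨y0 - inlAux _ _ p, ?_, ?_⟩
    · have : ηL i (inlAux (r i) (r (i + 1)) p) = lcAux (v i) p := by
        show lcAux (Fin.append (v i) (t i)) (Fin.append p 0) = _
        rw [lcAux_append]
        have h5 : (fun j => Fin.append p (0 : Fin (r (i+1)) → ℤ) (Fin.castAdd _ j)) = p := by
          funext j; simp [Fin.append_left]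
        have h6 : (fun j => Fin.append p (0 : Fin (r (i+1)) → ℤ) (Fin.natAdd _ j))
            = (0 : Fin (r (i+1)) → ℤ) := by
          funext j; simp [Fin.append_right]
        rw [h5, h6, map_zero, add_zero]
      rw [map_sub, this, hp, sub_self]
    · rw [map_sub]
      have : fL i (inlAux (r i) (r (i + 1)) p) = 0 := by
        show inlAux _ _ (sndAux _ _ (inlAux _ _ p)) = 0
        rw [snd_inl, map_zero]
      rw [this, sub_zero, hy0]
  -- the kernel complex, as free modules
  have hrestrict : ∀ i, ∀ x ∈ LinearMap.ker (ηL i), fL i x ∈ LinearMap.ker (ηL (i + 1)) := by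
    intro i x hx
    have : ηL (i + 1) (fL i x) = gl i (ηL i x) := (comm i x).symm
    simp only [LinearMap.mem_ker] at hx ⊢
    rw [this, hx, map_zero]
  let F' : ∀ i, LinearMap.ker (ηL i) →ₗ[ℤ] LinearMap.ker (ηL (i + 1)) :=
    fun i => (fL i).restrict (hrestrict i)
  let bs : ∀ i, Σ k, Module.Basis (Fin k) ℤ (LinearMap.ker (ηL i)) :=
    fun i => Submodule.basisOfPid (Pi.basisFun ℤ (Fin (m i))) (LinearMap.ker (ηL i))
  let n : ZMod 6 → ℕ := fun i => (bs i).1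
  let B : ∀ i, Module.Basis (Fin (n i)) ℤ (LinearMap.ker (ηL i)) := fun i => (bs i).2
  let e : ∀ i, LinearMap.ker (ηL i) ≃ₗ[ℤ] (Fin (n i) → ℤ) := fun i => (B i).equivFun
  let hL : ∀ i, (Fin (n i) → ℤ) →ₗ[ℤ] (Fin (n (i + 1)) → ℤ) :=
    fun i => ((e (i + 1)).toLinearMap.comp (F' i)).comp (e i).symm.toLinearMap
  let lamL : ∀ i, (Fin (n i) → ℤ) →ₗ[ℤ] (Fin (m i) → ℤ) :=
    fun i => (LinearMap.ker (ηL i)).subtype.comp (e i).symm.toLinearMap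
  refine ⟨n, m, fun i => (hL i).toAddMonoidHom, fun i => (fL i).toAddMonoidHom,
    fun i => (lamL i).toAddMonoidHom, fun i => (ηL i).toAddMonoidHom,
    ?_, ?_, ?_, ?_, ?_, ?_, ?_⟩
  · -- exactness of h
    intro i
    ext x
    simp only [AddMonoidHom.mem_range, AddMonoidHom.mem_ker, LinearMap.toAddMonoidHom_coe]
    constructor
    · rintro ⟨u, rfl⟩
      show hL (i + 1) (hL i u) = 0
      have : F' (i + 1) (F' i ((e i).symm u)) = 0 := by
        apply Subtype.ext
        show fL (i + 1) (fL i (((e i).symm u : Fin (m i) → ℤ))) = 0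
        exact hfzero i _
      show e (i + 1 + 1) (F' (i + 1) ((e (i + 1)).symm (e (i + 1) (F' i ((e i).symm u))))) = 0
      rw [LinearEquiv.symm_apply_apply, this, map_zero]
    · intro hx
      set X : LinearMap.ker (ηL (i + 1)) := (e (i + 1)).symm x with hX
      have hFX : F' (i + 1) X = 0 := by
        have : e (i + 1 + 1) (F' (i + 1) X) = 0 := hx
        have := congrArg (e (i + 1 + 1)).symm this
        simpa using this
      have hX1 : ηL (i + 1) (X : Fin (m (i + 1)) → ℤ) = 0 := X.2
      have hX2 : fL (i + 1) (X : Fin (m (i + 1)) → ℤ) = 0 := by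
        have := congrArg (Subtype.val) hFX
        exact this
      obtain ⟨y, hy1, hy2⟩ := chase i (X : Fin (m (i + 1)) → ℤ) hX1 hX2
      refine ⟨e i ⟨y, hy1⟩, ?_⟩
      show e (i + 1) (F' i ((e i).symm (e i ⟨y, hy1⟩))) = x
      rw [LinearEquiv.symm_apply_apply]
      have : F' i ⟨y, hy1⟩ = X := by
        apply Subtype.ext
        exact hy2
      rw [this, hX, LinearEquiv.apply_symm_apply]
  · -- exactness of f
    intro i
    ext c
    simp only [AddMonoidHom.mem_range, AddMonoidHom.mem_ker, LinearMap.toAddMonoidHom_coe]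
    constructor
    · rintro ⟨y, rfl⟩
      exact hfzero i y
    · intro hc
      exact hfexact i c hc
  · -- f ∘ lam = lam ∘ h
    intro i
    refine AddMonoidHom.ext fun u => ?_
    show fL i (lamL i u) = lamL (i + 1) (hL i u)
    show fL i (((e i).symm u : Fin (m i) → ℤ))
      = ((e (i + 1)).symm (e (i + 1) (F' i ((e i).symm u))) : Fin (m (i + 1)) → ℤ)
    rw [LinearEquiv.symm_apply_apply]
    rfl
  · -- g ∘ η = η ∘ f
    intro i
    exact AddMonoidHom.ext fun c => comm i c
  · -- lam injective
    intro i
    have : Function.Injective (lamL i) :=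
      (LinearMap.ker (ηL i)).injective_subtype.comp (e i).symm.injective
    exact this
  · -- η surjective
    exact hsurj
  · -- range lam = ker η
    intro i
    ext c
    simp only [AddMonoidHom.mem_range, AddMonoidHom.mem_ker, LinearMap.toAddMonoidHom_coe]
    constructor
    · rintro ⟨u, rfl⟩
      exact ((e i).symm u).2
    · intro hc
      refine ⟨e i ⟨c, hc⟩, ?_⟩
      show (((e i).symm (e i ⟨c, hc⟩) : LinearMap.ker (ηL i)) : Fin (m i) → ℤ) = c
      rw [LinearEquiv.symm_apply_apply]
end

section
/- Let A be a C*-algebra and let p : [0,1] → A be a norm-continuous map such that p(t) is a projection (p(t)* = p(t) and p(t)² = p(t)) for every t ∈ [0,1]. Then p(0) and p(1) are Murray–von Neumann equivalent, i.e. there exists v ∈ A with v*v = p(0) and vv* = p(1). -/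
open Unitization

section CommuteCfc

variable {B : Type*} [CStarAlgebra B]

lemma commute_cfc_aux {a b : B} (hb : Commute b a) (f : ℝ → ℝ) :
    Commute b (cfc f a) := by
  refine cfc_cases (fun x => Commute b x) a f (Commute.zero_right b) fun hf ha => ?_
  suffices H : ∀ g : C(spectrum ℝ a, ℝ), Commute b (cfcHom ha g) by exact H _
  intro g
  induction g using ContinuousMap.induction_on_of_compact with
  | const r =>
      have : (ContinuousMap.const (spectrum ℝ a) r) = algebraMap ℝ C(spectrum ℝ a, ℝ) r := by
        ext x; simp
      rw [this, AlgHomClass.commutes]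
      exact (Algebra.commutes r b).symm
  | id => rw [cfcHom_id ha]; exact hb
  | star_id =>
      have : star (ContinuousMap.restrict (spectrum ℝ a) (ContinuousMap.id ℝ))
          = ContinuousMap.restrict (spectrum ℝ a) (ContinuousMap.id ℝ) := by
        ext x; simp
      rw [this, cfcHom_id ha]; exact hb
  | add f g hfc hgc => rw [map_add]; exact hfc.add_right hgc
  | mul f g hfc hgc => rw [map_mul]; exact hfc.mul_right hgc
  | frequently f hf =>
      have hcl : IsClosed {x : B | Commute b x} :=
        isClosed_eq (continuous_mul_left b) (continuous_mul_right b)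
      have hcl' : IsClosed {g : C(spectrum ℝ a, ℝ) | Commute b (cfcHom ha g)} :=
        hcl.preimage (cfcHom_isClosedEmbedding ha).continuous
      have hmem : f ∈ closure {g : C(spectrum ℝ a, ℝ) | Commute b (cfcHom ha g)} :=
        mem_closure_iff_frequently.mpr hf
      rwa [hcl'.closure_eq] at hmem

end CommuteCfc

section Core

variable {A : Type*} [NonUnitalNormedRing A] [StarRing A] [CStarRing A] [CompleteSpace A]
  [NormedSpace ℂ A] [IsScalarTower ℂ A A] [SMulCommClass ℂ A A] [StarModule ℂ A]

lemma mvn_of_close {p q : A} (hp1 : star p = p) (hp2 : p * p = p)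
    (hq1 : star q = q) (hq2 : q * q = q) (hpq : ‖p - q‖ < 1) :
    ∃ v : A, star v * v = p ∧ v * star v = q := by
  letI : NonUnitalCStarAlgebra A := { }
  set P : Unitization ℂ A := (p : Unitization ℂ A) with hPdef
  set Q : Unitization ℂ A := (q : Unitization ℂ A) with hQdef
  have hPP : P * P = P := by rw [hPdef, ← Unitization.inr_mul, hp2]
  have hQQ : Q * Q = Q := by rw [hQdef, ← Unitization.inr_mul, hq2]
  have hPs : star P = P := by rw [hPdef, ← Unitization.inr_star, hp1]
  have hQs : star Q = Q := by rw [hQdef, ← Unitization.inr_star, hq1]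
  have hPPl : ∀ x : Unitization ℂ A, P * (P * x) = P * x := fun x => by rw [← mul_assoc, hPP]
  have hQQl : ∀ x : Unitization ℂ A, Q * (Q * x) = Q * x := fun x => by rw [← mul_assoc, hQQ]
  set Z : Unitization ℂ A := Q * P + (1 - Q) * (1 - P) with hZdef
  set a : Unitization ℂ A := 1 - (P - Q) * (P - Q) with hadef
  have hZstar : star Z = P * Q + (1 - P) * (1 - Q) := by
    rw [hZdef]
    simp [star_add, star_mul, star_sub, star_one, hPs, hQs]
  have hZsZ : star Z * Z = a := by
    rw [hZstar, hZdef, hadef]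
    simp only [mul_sub, sub_mul, mul_add, add_mul, mul_one, one_mul, mul_assoc,
      hPP, hQQ, hPPl, hQQl]
    abel
  have hZZs : Z * star Z = a := by
    rw [hZstar, hZdef, hadef]
    simp only [mul_sub, sub_mul, mul_add, add_mul, mul_one, one_mul, mul_assoc,
      hPP, hQQ, hPPl, hQQl]
    abel
  have hZP : Z * P = Q * Z := by
    rw [hZdef]
    simp only [mul_sub, sub_mul, mul_add, add_mul, mul_one, one_mul, mul_assoc,
      hPP, hQQ, hPPl, hQQl]
    abel
  have hPa : Commute P a := by
    rw [hadef]
    show P * _ = _ * P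
    simp only [mul_sub, sub_mul, mul_add, add_mul, mul_one, one_mul, mul_assoc,
      hPP, hQQ, hPPl, hQQl]
    abel
  -- norm bound
  have hPQ : P - Q = ((p - q : A) : Unitization ℂ A) := by rw [hPdef, hQdef, Unitization.inr_sub]
  have hPQnorm : ‖P - Q‖ < 1 := by rw [hPQ, Unitization.norm_inr]; exact hpq
  have hPQs : star (P - Q) = P - Q := by rw [star_sub, hPs, hQs]
  have hDnorm : ‖(P - Q) * (P - Q)‖ < 1 := by
    calc ‖(P - Q) * (P - Q)‖ = ‖star (P - Q) * (P - Q)‖ := by rw [hPQs]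
      _ = ‖P - Q‖ * ‖P - Q‖ := CStarRing.norm_star_mul_self
      _ < 1 := by nlinarith [norm_nonneg (P - Q)]
  have ha_unit : IsUnit a := by
    rw [hadef]; exact (Units.oneSub _ hDnorm).isUnit
  have ha_sa : IsSelfAdjoint a := by
    rw [hadef]
    simp only [IsSelfAdjoint, star_sub, star_one, star_mul, hPQs]
  -- spectrum of a is nonnegative
  have hspec : ∀ x ∈ spectrum ℝ a, 0 ≤ x := by
    intro x hx
    rw [hadef] at hx
    rw [show (1 : Unitization ℂ A) = algebraMap ℝ (Unitization ℂ A) 1 by simp, ← spectrum.singleton_sub_eq] at hx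
    rw [Set.mem_sub] at hx
    obtain ⟨y, hy, z, hz, hyz⟩ := hx
    rw [Set.mem_singleton_iff] at hy
    subst hy
    have hzn : ‖z‖ ≤ ‖(P - Q) * (P - Q)‖ := spectrum.norm_le_norm_of_mem hz
    have : |z| < 1 := lt_of_le_of_lt hzn hDnorm
    rw [abs_lt] at this
    linarith [hyz]
  -- square root
  set g : Unitization ℂ A := cfc Real.sqrt a with hgdef
  have hg_sa : IsSelfAdjoint g := cfc_predicate Real.sqrt a
  have hgg : g * g = a := by
    rw [hgdef, ← cfc_mul Real.sqrt Real.sqrt a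
      Real.continuous_sqrt.continuousOn Real.continuous_sqrt.continuousOn]
    rw [cfc_congr (g := fun x : ℝ => x) (fun x hx => Real.mul_self_sqrt (hspec x hx))]
    exact cfc_id' ℝ a ha_sa
  have hg_comm : Commute P g := commute_cfc_aux hPa Real.sqrt
  obtain ⟨w, hw⟩ := ha_unit
  have hga : Commute g a := by rw [← hgg]; exact (Commute.refl g).mul_right (Commute.refl g)
  have hgw : Commute g (w : Unitization ℂ A) := by rw [hw]; exact hga
  have hgu : IsUnit g := by
    refine isUnit_iff_exists.mpr ⟨g * ↑w⁻¹, ?_, ?_⟩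
    · rw [← mul_assoc, hgg, ← hw, w.mul_inv]
    · rw [mul_assoc, ← (hgw.units_inv_right).eq, ← mul_assoc, hgg, ← hw, w.mul_inv]
  obtain ⟨u, hu⟩ := hgu
  set h : Unitization ℂ A := (↑u⁻¹ : Unitization ℂ A) with hhdef
  have hgh : g * h = 1 := by rw [hhdef, ← hu]; exact u.mul_inv
  have hhg : h * g = 1 := by rw [hhdef, ← hu]; exact u.inv_mul
  have hgh' : ∀ x : Unitization ℂ A, g * (h * x) = x := fun x => by rw [← mul_assoc, hgh, one_mul]
  have hhg' : ∀ x : Unitization ℂ A, h * (g * x) = x := fun x => by rw [← mul_assoc, hhg, one_mul]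
  have hhs : star h = h := by
    have h1 : star h * g = 1 := by
      rw [← hg_sa.star_eq, ← star_mul, hgh, star_one]
    calc star h = star h * (g * h) := by rw [hgh, mul_one]
      _ = (star h * g) * h := by simp only [mul_assoc]
      _ = h := by rw [h1, one_mul]
  have hPh : Commute P h := by
    have : Commute P (u : Unitization ℂ A) := by rw [hu]; exact hg_comm
    exact this.units_inv_right
  have hPh' : ∀ x : Unitization ℂ A, P * (h * x) = h * (P * x) := fun x => by
    rw [← mul_assoc, hPh.eq, mul_assoc]
  -- Z is a unit
  have hZu : IsUnit Z := by
    have hb : Z * (star Z * ↑w⁻¹) = 1 := by rw [← mul_assoc, hZZs, ← hw, w.mul_inv]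
    have hc : (↑w⁻¹ * star Z) * Z = 1 := by rw [mul_assoc, hZsZ, ← hw, w.inv_mul]
    have hbc : (↑w⁻¹ * star Z : Unitization ℂ A) = star Z * ↑w⁻¹ := by
      calc (↑w⁻¹ * star Z : Unitization ℂ A) = (↑w⁻¹ * star Z) * (Z * (star Z * ↑w⁻¹)) := by
            rw [hb, mul_one]
        _ = ((↑w⁻¹ * star Z) * Z) * (star Z * ↑w⁻¹) := by simp only [mul_assoc]
        _ = star Z * ↑w⁻¹ := by rw [hc, one_mul]
    exact isUnit_iff_exists.mpr ⟨star Z * ↑w⁻¹, hb, by rw [← hbc]; exact hc⟩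
  obtain ⟨uZ, huZ⟩ := hZu
  have hZinv : Z * ↑uZ⁻¹ = 1 := by rw [← huZ]; exact uZ.mul_inv
  have hsZ : star Z = g * (g * ↑uZ⁻¹) := by
    calc star Z = star Z * (Z * ↑uZ⁻¹) := by rw [hZinv, mul_one]
      _ = (star Z * Z) * ↑uZ⁻¹ := by simp only [mul_assoc]
      _ = a * ↑uZ⁻¹ := by rw [hZsZ]
      _ = g * (g * ↑uZ⁻¹) := by rw [← hgg, mul_assoc]
  have hPZs : P * star Z = star Z * Q := by
    have := congrArg star hZP
    rwa [star_mul, star_mul, hPs, hQs] at this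
  set V : Unitization ℂ A := Z * (h * P) with hVdef
  have hVsV : star V * V = P := by
    have hstarV : star V = P * (h * star Z) := by
      rw [hVdef, star_mul, star_mul, hPs, hhs, mul_assoc]
    calc star V * V = (P * (h * star Z)) * (Z * (h * P)) := by rw [hstarV]
      _ = P * (h * (star Z * (Z * (h * P)))) := by simp only [mul_assoc]
      _ = P * (h * ((star Z * Z) * (h * P))) := by rw [← mul_assoc (star Z)]
      _ = P * (h * (g * (g * (h * P)))) := by rw [hZsZ, ← hgg, mul_assoc]
      _ = P * (h * (g * P)) := by rw [hgh' P]
      _ = P * P := by rw [hhg' P]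
      _ = P := hPP
  have hVVs : V * star V = Q := by
    have hstarV : star V = P * (h * star Z) := by
      rw [hVdef, star_mul, star_mul, hPs, hhs, mul_assoc]
    have key : Z * (h * (h * star Z)) = 1 := by
      rw [hsZ, hhg' (g * ↑uZ⁻¹), hhg' (↑uZ⁻¹ : Unitization ℂ A), hZinv]
    calc V * star V = (Z * (h * P)) * (P * (h * star Z)) := by rw [hstarV]
      _ = Z * (h * (P * (P * (h * star Z)))) := by simp only [mul_assoc]
      _ = Z * (h * (P * (h * star Z))) := by rw [hPPl]
      _ = Z * (h * (h * (P * star Z))) := by rw [hPh' (star Z)]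
      _ = Z * (h * (h * (star Z * Q))) := by rw [hPZs]
      _ = (Z * (h * (h * star Z))) * Q := by simp only [mul_assoc]
      _ = Q := by rw [key, one_mul]
  -- pull back to A
  have hfst : V.fst = 0 := by
    rw [hVdef]
    simp [Unitization.fst_mul, hPdef, Unitization.fst_inr]
  have hv : ((V.snd : A) : Unitization ℂ A) = V := by
    conv_rhs => rw [← Unitization.inl_fst_add_inr_snd_eq V]
    rw [hfst, Unitization.inl_zero, zero_add]
  refine ⟨V.snd, ?_, ?_⟩
  · apply Unitization.inr_injective (R := ℂ)
    rw [Unitization.inr_mul, Unitization.inr_star, hv, ← hPdef]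
    exact hVsV
  · apply Unitization.inr_injective (R := ℂ)
    rw [Unitization.inr_mul, Unitization.inr_star, hv, ← hQdef]
    exact hVVs

end Core

/-- The endpoints of a norm-continuous path of projections in a C*-algebra are
Murray–von Neumann equivalent. -/
theorem projection_path_endpoints_mvn_equivalent
    {A : Type*} [NonUnitalNormedRing A] [StarRing A] [CStarRing A] [CompleteSpace A]
    [NormedSpace ℂ A] [IsScalarTower ℂ A A] [SMulCommClass ℂ A A] [StarModule ℂ A]
    (p : ℝ → A) (hcont : ContinuousOn p (Set.Icc 0 1))
    (hproj : ∀ t ∈ Set.Icc (0 : ℝ) 1, star (p t) = p t ∧ p t * p t = p t) :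
    ∃ v : A, star v * v = p 0 ∧ v * star v = p 1 := by
  have huc : UniformContinuousOn p (Set.Icc 0 1) :=
    isCompact_Icc.uniformContinuousOn_of_continuous hcont
  rw [Metric.uniformContinuousOn_iff] at huc
  obtain ⟨δ, hδ, hδ'⟩ := huc 1 one_pos
  obtain ⟨n, hn⟩ := exists_nat_one_div_lt hδ
  set N : ℕ := n + 1 with hNdef
  have hN0 : (0 : ℝ) < N := by positivity
  have hNδ : 1 / (N : ℝ) < δ := by rw [hNdef]; push_cast; exact hn
  have hmem : ∀ k : ℕ, k ≤ N → ((k : ℝ) / N) ∈ Set.Icc (0 : ℝ) 1 := by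
    intro k hk
    constructor
    · positivity
    · rw [div_le_one hN0]; exact_mod_cast hk
  have h00 : (0 : ℝ) ∈ Set.Icc (0 : ℝ) 1 := Set.mem_Icc.mpr ⟨le_refl 0, zero_le_one⟩
  have claim : ∀ k : ℕ, k ≤ N → ∃ v : A, star v * v = p 0 ∧ v * star v = p ((k : ℝ) / N) := by
    intro k
    induction k with
    | zero =>
        intro _
        obtain ⟨hs, hm⟩ := hproj 0 h00
        refine ⟨p 0, ?_, ?_⟩ <;> simp [hs, hm, Nat.cast_zero, zero_div]
    | succ k ih =>
        intro hk
        obtain ⟨v, hv1, hv2⟩ := ih (Nat.le_of_succ_le hk)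
        set t₁ : ℝ := (k : ℝ) / N with ht₁def
        set t₂ : ℝ := ((k + 1 : ℕ) : ℝ) / N with ht₂def
        have ht₁ : t₁ ∈ Set.Icc (0 : ℝ) 1 := hmem k (Nat.le_of_succ_le hk)
        have ht₂ : t₂ ∈ Set.Icc (0 : ℝ) 1 := hmem (k + 1) hk
        have hdist : dist t₁ t₂ < δ := by
          have h12 : t₂ - t₁ = 1 / N := by
            rw [ht₁def, ht₂def]
            push_cast
            field_simp
            ring
          rw [Real.dist_eq, abs_sub_comm, h12, abs_of_pos (by positivity)]
          exact hNδ
        have hnorm : ‖p t₁ - p t₂‖ < 1 := by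
          have := hδ' t₁ ht₁ t₂ ht₂ hdist
          rwa [dist_eq_norm] at this
        obtain ⟨hs1, hm1⟩ := hproj t₁ ht₁
        obtain ⟨hs2, hm2⟩ := hproj t₂ ht₂
        obtain ⟨w, hw1, hw2⟩ := mvn_of_close hs1 hm1 hs2 hm2 hnorm
        refine ⟨w * v, ?_, ?_⟩
        · rw [star_mul]
          calc star v * star w * (w * v)
              = star v * ((star w * w) * v) := by simp only [mul_assoc]
            _ = star v * ((v * star v) * v) := by rw [hw1, hv2]
            _ = (star v * v) * (star v * v) := by simp only [mul_assoc]
            _ = p 0 := by rw [hv1]; exact (hproj 0 h00).2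
        · rw [star_mul]
          calc w * v * (star v * star w)
              = w * ((v * star v) * star w) := by simp only [mul_assoc]
            _ = w * ((star w * w) * star w) := by rw [hv2, hw1]
            _ = (w * star w) * (w * star w) := by simp only [mul_assoc]
            _ = p t₂ := by rw [hw2]; exact hm2
  obtain ⟨v, hv1, hv2⟩ := claim N (le_refl N)
  refine ⟨v, hv1, ?_⟩
  rwa [div_self (ne_of_gt hN0)] at hv2
end

section
/- Let (G_i, g_i)_{i ∈ ℤ/6} be an exact cyclic six-term sequence of finitely generated abelian groups such that the map g_2 : G_2 → G_3 is zero and G_5 is torsion-free. Then (G_i, g_i) is isomorphic, as a cyclic six-term sequence, to a direct sum (G'_i ⊕ G''_i, g'_i ⊕ g''_i) of two exact cyclic six-term sequences, where G'_3 = 0 and G'_4 and G'_5 are finitely generated free abelian groups, and where G''_i = 0 for all i ∉ {3,4} while g''_3 : G''_3 → G''_4 is an isomorphism. (An isomorphism of cyclic six-term sequences is a family of group isomorphisms φ_i : G_i → G'_i ⊕ G''_i with φ_{i+1} ∘ g_i = (g'_i ⊕ g''_i) ∘ φ_i for all i ∈ ℤ/6.) -/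
private theorem sub_fg_free' {M : Type*} [AddCommGroup M] [Module.Finite ℤ M] (H : AddSubgroup M)
    (htf : ∀ x ∈ H, ∀ c : ℤ, c • x = 0 → c = 0 ∨ x = 0) :
    AddGroup.FG H ∧ Module.Free ℤ H := by
  haveI : NoZeroSMulDivisors ℤ H := by
    constructor
    rintro c ⟨x, hx⟩ h
    have h' : c • x = 0 := by
      have := congrArg Subtype.val h; simpa using this
    rcases htf x hx c h' with h | h
    · exact Or.inl h
    · exact Or.inr (by ext; exact h)
  haveI : Module.Finite ℤ H :=
    Module.Finite.iff_fg.mpr (IsNoetherian.noetherian (AddSubgroup.toIntSubmodule H))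
  exact ⟨Module.Finite.iff_addGroup_fg.1 inferInstance, inferInstance⟩

private theorem split_lemma' {M N : Type*} [AddCommGroup M] [AddCommGroup N] [Module.Finite ℤ M]
    [Module.Finite ℤ N] [NoZeroSMulDivisors ℤ N] (f : M →+ N) :
    ∃ A : AddSubgroup M, (∀ x ∈ A, f x = 0 → x = 0) ∧
      (∀ x : M, ∃ a ∈ A, ∃ b, f b = 0 ∧ x = a + b) ∧
      (∀ x ∈ A, ∀ c : ℤ, c • x = 0 → c = 0 ∨ x = 0) := by
  set l := f.toIntLinearMap with hl
  haveI : Module.Finite ℤ (LinearMap.range l) :=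
    Module.Finite.iff_fg.mpr (IsNoetherian.noetherian _)
  haveI : Module.Free ℤ (LinearMap.range l) := inferInstance
  obtain ⟨s, hs⟩ := Module.projective_lifting_property l.rangeRestrict LinearMap.id
    l.surjective_rangeRestrict
  have hsec : ∀ q, l.rangeRestrict (s q) = q := fun q => LinearMap.congr_fun hs q
  have hker : ∀ x ∈ LinearMap.range s, f x = 0 → x = 0 := by
    rintro x ⟨q, rfl⟩ hx
    have hq : q = 0 := by
      rw [← hsec q]
      ext
      simpa using (show l (s q) = 0 from hx)
    rw [hq, map_zero]
  refine ⟨(LinearMap.range s).toAddSubgroup, hker, ?_, ?_⟩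
  · intro x
    refine ⟨s (l.rangeRestrict x), ⟨_, rfl⟩, x - s (l.rangeRestrict x), ?_, by abel⟩
    have : l (s (l.rangeRestrict x)) = l x := congrArg Subtype.val (hsec (l.rangeRestrict x))
    rw [map_sub]
    rw [show f (s (l.rangeRestrict x)) = l (s (l.rangeRestrict x)) from rfl, this]
    simp [hl]
  · intro x hx c hc
    have : c • f x = 0 := by rw [← map_zsmul, hc, map_zero]
    rcases eq_zero_or_eq_zero_of_smul_eq_zero this with h | h
    · exact Or.inl h
    · exact Or.inr (hker x hx h)

/-- An exact cyclic six-term sequence `(G_i, g_i)` of finitely generated abelian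
groups with `g_2 = 0` and `G_5` torsion-free decomposes as a direct sum of two exact
cyclic six-term sequences: internally, there are subgroups `A_i` and `B_i` of `G_i`,
complementary in each `G_i` and preserved by the maps `g_i`, such that both restricted
sequences are exact, `A_3 = 0`, `A_4` and `A_5` are finitely generated free abelian
groups, `B_i = 0` for `i ∉ {3,4}`, and `g_3` restricts to an isomorphism `B_3 → B_4`. -/
theorem six_term_direct_sum_decomposition
    {G : ZMod 6 → Type*} [∀ i, AddCommGroup (G i)]
    (g : ∀ i, G i →+ G (i + 1))
    (hexact : ∀ i, (g i).range = (g (i + 1)).ker)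
    (hfg : ∀ i, AddGroup.FG (G i))
    (hg2 : g 2 = 0)
    (htf : ∀ (x : G 5) (c : ℕ), c • x = 0 → c = 0 ∨ x = 0) :
    ∃ A B : ∀ i, AddSubgroup (G i),
      (∀ i, IsCompl (A i) (B i)) ∧
      (∀ i, (A i).map (g i) ≤ A (i + 1)) ∧
      (∀ i, (B i).map (g i) ≤ B (i + 1)) ∧
      (∀ i, ∀ y ∈ A (i + 1), (g (i + 1) y = 0 ↔ ∃ x ∈ A i, g i x = y)) ∧
      (∀ i, ∀ y ∈ B (i + 1), (g (i + 1) y = 0 ↔ ∃ x ∈ B i, g i x = y)) ∧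
      A 3 = ⊥ ∧
      AddGroup.FG (A 4) ∧ Module.Free ℤ (A 4) ∧
      AddGroup.FG (A 5) ∧ Module.Free ℤ (A 5) ∧
      (∀ i, i ≠ 3 → i ≠ 4 → B i = ⊥) ∧
      (∀ x ∈ B 3, g 3 x = 0 → x = 0) ∧
      (∀ y ∈ B (3 + 1), ∃ x ∈ B 3, g 3 x = y) := by
  haveI hfin : ∀ i, Module.Finite ℤ (G i) := fun i => Module.Finite.iff_addGroup_fg.2 (hfg i)
  -- integer torsion-freeness of G 5
  have htfZ : ∀ (x : G 5) (c : ℤ), c • x = 0 → c = 0 ∨ x = 0 := by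
    intro x c hc
    rcases le_or_gt 0 c with h | h
    · lift c to ℕ using h
      have h2 : c • x = 0 := by rwa [natCast_zsmul] at hc
      rcases htf x c h2 with h' | h'
      · exact Or.inl (by exact_mod_cast h')
      · exact Or.inr h'
    · have hc' : (-c) • x = 0 := by rw [neg_smul, hc, neg_zero]
      lift -c to ℕ using (by omega) with d hd
      have h2 : d • x = 0 := by rwa [natCast_zsmul] at hc'
      rcases htf x d h2 with h' | h'
      · exact Or.inl (by omega)
      · exact Or.inr h'
  haveI : NoZeroSMulDivisors ℤ (G 5) := ⟨fun {c x} h => htfZ x c h⟩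
  haveI : NoZeroSMulDivisors ℤ (G (4 + 1)) := by
    exact (inferInstance : NoZeroSMulDivisors ℤ (G 5))
  have hcases : ∀ j : ZMod 6, j = 0 ∨ j = 1 ∨ j = 2 ∨ j = 3 ∨ j = 4 ∨ j = 5 := by decide
  -- general consequences of exactness
  have hek : ∀ i (y : G (i + 1)), g (i + 1) y = 0 → ∃ x, g i x = y := by
    intro i y hy
    have h : y ∈ (g (i + 1)).ker := hy
    rw [← hexact i] at h
    exact h
  have hre : ∀ i (x : G i), g (i + 1) (g i x) = 0 := by
    intro i x
    have h : g i x ∈ (g i).range := ⟨x, rfl⟩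
    rw [hexact i] at h
    exact h
  -- injectivity of g 3
  have hg3inj : ∀ x : G 3, g 3 x = 0 → x = 0 := by
    intro x hx
    obtain ⟨z, hz⟩ := hek 2 x hx
    rw [hg2] at hz
    simpa using hz.symm
  -- splitting of G 4
  obtain ⟨A4, hA4ker, hA4sum, hA4tf⟩ := split_lemma' (g 4)
  -- torsion-freeness arguments for A 5 = ⊤
  have htop5 : ∀ x ∈ (⊤ : AddSubgroup (G 5)), ∀ c : ℤ, c • x = 0 → c = 0 ∨ x = 0 :=
    fun x _ c hc => htfZ x c hc
  refine ⟨fun i => if h : i = 4 then cast (by rw [h]) A4 else if i = 3 then ⊥ else ⊤,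
    fun i => if h : i = 4 then cast (by rw [h]) (g 4).ker else if i = 3 then ⊤ else ⊥,
    ?_, ?_, ?_, ?_, ?_, ?_, ?_, ?_, ?_, ?_, ?_, ?_, ?_⟩
  · -- IsCompl
    intro i
    rcases hcases i with rfl | rfl | rfl | rfl | rfl | rfl
    · exact isCompl_top_bot
    · exact isCompl_top_bot
    · exact isCompl_top_bot
    · exact isCompl_bot_top
    · show IsCompl A4 (g 4).ker
      constructor
      · rw [AddSubgroup.disjoint_def]
        intro x hx hx'
        exact hA4ker x hx hx'
      · rw [codisjoint_iff, eq_top_iff]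
        intro x _
        obtain ⟨a, ha, b, hb, hx⟩ := hA4sum x
        exact AddSubgroup.mem_sup.mpr ⟨a, ha, b, hb, hx.symm⟩
    · exact isCompl_top_bot
  · -- A maps
    intro i
    rcases hcases i with rfl | rfl | rfl | rfl | rfl | rfl
    · exact le_top
    · exact le_top
    · rintro x ⟨y, -, rfl⟩
      show g 2 y ∈ (⊥ : AddSubgroup (G (2 + 1)))
      rw [hg2]
      simp
    · rintro x ⟨y, hy, rfl⟩
      rw [AddSubgroup.mem_bot.mp hy, map_zero]
      exact AddSubgroup.zero_mem _
    · exact le_top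
    · exact le_top
  · -- B maps
    intro i
    rcases hcases i with rfl | rfl | rfl | rfl | rfl | rfl
    · rintro x ⟨y, hy, rfl⟩
      show g 0 y ∈ (⊥ : AddSubgroup (G (0 + 1)))
      rw [AddSubgroup.mem_bot.mp hy]
      simp
    · rintro x ⟨y, hy, rfl⟩
      show g 1 y ∈ (⊥ : AddSubgroup (G (1 + 1)))
      rw [AddSubgroup.mem_bot.mp hy]
      simp
    · rintro x ⟨y, hy, rfl⟩
      show g 2 y ∈ (⊤ : AddSubgroup (G (2 + 1)))
      trivial
    · rintro x ⟨y, hy, rfl⟩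
      show g 3 y ∈ (g 4).ker
      exact hre 3 y
    · rintro x ⟨y, hy, rfl⟩
      show g 4 y ∈ (⊥ : AddSubgroup (G (4 + 1)))
      have : g 4 y = 0 := hy
      rw [this]; simp
    · rintro x ⟨y, hy, rfl⟩
      show g 5 y ∈ (⊥ : AddSubgroup (G (5 + 1)))
      rw [AddSubgroup.mem_bot.mp hy]
      simp
  · -- A exactness
    intro i
    rcases hcases i with rfl | rfl | rfl | rfl | rfl | rfl
    · intro y _
      constructor
      · intro hy
        obtain ⟨x, hx⟩ := hek 0 y hy
        exact ⟨x, trivial, hx⟩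
      · rintro ⟨x, -, rfl⟩
        exact hre 0 x
    · intro y _
      constructor
      · intro hy
        obtain ⟨x, hx⟩ := hek 1 y hy
        exact ⟨x, trivial, hx⟩
      · rintro ⟨x, -, rfl⟩
        exact hre 1 x
    · intro y hy
      have hy0 : y = 0 := AddSubgroup.mem_bot.mp hy
      subst hy0
      constructor
      · intro _
        exact ⟨0, trivial, map_zero _⟩
      · intro _
        exact map_zero _
    · intro y hy
      constructor
      · intro h0
        have : y = 0 := hA4ker y hy h0
        exact ⟨0, AddSubgroup.zero_mem _, by rw [map_zero, this]⟩
      · rintro ⟨x, hx, rfl⟩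
        rw [AddSubgroup.mem_bot.mp hx, map_zero, map_zero]
    · intro y _
      constructor
      · intro hy
        obtain ⟨z, hz⟩ := hek 4 y hy
        obtain ⟨a, ha, b, hb, hzab⟩ := hA4sum z
        refine ⟨a, ha, ?_⟩
        rw [← hz, hzab, map_add, hb, add_zero]
      · rintro ⟨x, -, rfl⟩
        exact hre 4 x
    · intro y _
      constructor
      · intro hy
        obtain ⟨x, hx⟩ := hek 5 y hy
        exact ⟨x, trivial, hx⟩
      · rintro ⟨x, -, rfl⟩
        exact hre 5 x
  · -- B exactness
    intro i
    rcases hcases i with rfl | rfl | rfl | rfl | rfl | rfl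
    · intro y hy
      rw [AddSubgroup.mem_bot.mp hy]
      simp only [map_zero]
      exact Iff.intro (fun _ => ⟨0, AddSubgroup.zero_mem _, map_zero _⟩) (fun _ => trivial)
    · intro y hy
      rw [AddSubgroup.mem_bot.mp hy]
      simp only [map_zero]
      exact Iff.intro (fun _ => ⟨0, AddSubgroup.zero_mem _, map_zero _⟩) (fun _ => trivial)
    · intro y _
      constructor
      · intro hy
        exact ⟨0, AddSubgroup.zero_mem _, by rw [map_zero, hg3inj y hy]⟩
      · rintro ⟨x, hx, rfl⟩
        rw [AddSubgroup.mem_bot.mp hx, map_zero, map_zero]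
    · intro y hy
      constructor
      · intro _
        obtain ⟨x, hx⟩ := hek 3 y hy
        exact ⟨x, trivial, hx⟩
      · intro _
        exact hy
    · intro y hy
      rw [AddSubgroup.mem_bot.mp hy]
      simp only [map_zero]
      exact Iff.intro (fun _ => ⟨0, AddSubgroup.zero_mem _, map_zero _⟩) (fun _ => trivial)
    · intro y hy
      rw [AddSubgroup.mem_bot.mp hy]
      simp only [map_zero]
      exact Iff.intro (fun _ => ⟨0, AddSubgroup.zero_mem _, map_zero _⟩) (fun _ => trivial)
  · -- A 3 = ⊥
    rfl
  · exact (sub_fg_free' A4 hA4tf).1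
  · exact (sub_fg_free' A4 hA4tf).2
  · exact (sub_fg_free' (⊤ : AddSubgroup (G 5)) htop5).1
  · exact (sub_fg_free' (⊤ : AddSubgroup (G 5)) htop5).2
  · -- B i = ⊥ off 3,4
    intro i h3 h4
    rcases hcases i with rfl | rfl | rfl | rfl | rfl | rfl
    · rfl
    · rfl
    · rfl
    · exact absurd rfl h3
    · exact absurd rfl h4
    · rfl
  · -- injectivity on B 3
    intro x _ hx
    exact hg3inj x hx
  · -- surjectivity onto B 4
    intro y hy
    obtain ⟨x, hx⟩ := hek 3 y hy
    exact ⟨x, trivial, hx⟩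
end
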